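/- Let Φ : (0,∞) → [0,∞) be measurable. Then, as an identity in the extended nonnegative reals, ∫₀^∞ 4λ · ( (1/π) ∫₀^∞ (Φ(r) − λ²r⁻²)₊^{1/2} dr ) dλ = (4/(3π)) ∫₀^∞ r² Φ(r)^{3/2} dr. In particular, if (1/(3π²)) ∫₀^∞ 4π r² Φ(r)^{3/2} dr = 1 (the Thomas–Fermi normalization ∫_{ℝ³} Φ^{3/2}/(3π²) dx = 1), then ∫₀^∞ 4λ κ(λ) dλ = 1, where κ(λ) = (1/π) ∫₀^∞ (Φ(r) − λ²r⁻²)₊^{1/2} dr. -/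

import Mathlib

open MeasureTheory Real Filter Set
open scoped ENNReal

/-- For a measurable nonnegative `Φ` on `(0,∞)`, as an identity in `ℝ≥0∞`,
`∫₀^∞ 4λ ((1/π) ∫₀^∞ (Φ(r) − λ²r⁻²)₊^{1/2} dr) dλ = (4/(3π)) ∫₀^∞ r² Φ(r)^{3/2} dr`;
in particular, the Thomas–Fermi normalization implies `∫₀^∞ 4λ κ(λ) dλ = 1`. -/

lemma lintegral_image_eq_lintegral_abs_deriv_mul {s : Set ℝ} {f f' : ℝ → ℝ}
    (hs : MeasurableSet s) (hf' : ∀ x ∈ s, HasDerivWithinAt f (f' x) s x)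
    (hf : InjOn f s) (g : ℝ → ℝ≥0∞) :
    ∫⁻ x in f '' s, g x = ∫⁻ x in s, ENNReal.ofReal |f' x| * g (f x) := by
  simpa only [ContinuousLinearMap.det_toSpanSingleton] using
    lintegral_image_eq_lintegral_abs_det_fderiv_mul volume hs
      (fun x hx => (hf' x hx).hasFDerivWithinAt) hf g

lemma Jlem (a : ℝ) (ha : 0 ≤ a) :
    ∫⁻ s in Ioi (0:ℝ), ENNReal.ofReal ((max (a - s) 0) ^ ((1:ℝ)/2))
      = ENNReal.ofReal ((2/3) * a ^ ((3:ℝ)/2)) := by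
  rcases eq_or_lt_of_le ha with rfl | ha
  · rw [show ((2:ℝ)/3) * (0:ℝ) ^ ((3:ℝ)/2) = 0 by
      rw [Real.zero_rpow (by norm_num)]; ring, ENNReal.ofReal_zero]
    rw [← lintegral_zero (μ := volume.restrict (Ioi (0:ℝ)))]
    apply setLIntegral_congr_fun measurableSet_Ioi
    intro s hs; dsimp only
    rw [max_eq_right (by linarith [(mem_Ioi.mp hs).le] : (0:ℝ) - s ≤ 0),
      Real.zero_rpow (by norm_num), ENNReal.ofReal_zero]
  · have hsplit : Ioi (0:ℝ) = Ioo 0 a ∪ Ici a := by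
      ext x; simp only [mem_Ioi, mem_union, mem_Ioo, mem_Ici]
      constructor
      · intro hx; rcases lt_or_ge x a with h | h
        · exact Or.inl ⟨hx, h⟩
        · exact Or.inr h
      · rintro (⟨h1, _⟩ | h); exacts [h1, lt_of_lt_of_le ha h]
    rw [hsplit, lintegral_union measurableSet_Ici
      ((Iio_disjoint_Ici (le_refl a)).mono_left Ioo_subset_Iio_self)]
    have h2 : ∫⁻ s in Ici a, ENNReal.ofReal ((max (a - s) 0) ^ ((1:ℝ)/2)) = 0 := by
      rw [← lintegral_zero (μ := volume.restrict (Ici a))]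
      apply setLIntegral_congr_fun measurableSet_Ici
      intro s hs; dsimp only
      rw [max_eq_right (by have := mem_Ici.mp hs; linarith : a - s ≤ 0), Real.zero_rpow (by norm_num),
        ENNReal.ofReal_zero]
    rw [h2, add_zero]
    have h3 : ∫⁻ s in Ioo (0:ℝ) a, ENNReal.ofReal ((max (a - s) 0) ^ ((1:ℝ)/2))
        = ∫⁻ s in Ioo (0:ℝ) a, ENNReal.ofReal ((a - s) ^ ((1:ℝ)/2)) := by
      apply setLIntegral_congr_fun measurableSet_Ioo
      intro s hs; dsimp only
      rw [max_eq_left (by linarith [hs.2] : 0 ≤ a - s)]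
    rw [h3]
    have hcont : ContinuousOn (fun s : ℝ => (a - s) ^ ((1:ℝ)/2)) (Icc 0 a) := by
      apply ContinuousOn.rpow_const
      · exact (continuous_const.sub continuous_id).continuousOn
      · intro x hx; right; norm_num
    have hInt : IntegrableOn (fun s : ℝ => (a - s) ^ ((1:ℝ)/2)) (Ioo 0 a) :=
      (hcont.integrableOn_Icc).mono_set Ioo_subset_Icc_self
    rw [← MeasureTheory.ofReal_integral_eq_lintegral_ofReal hInt]
    · congr 1
      have : ∫ s in Ioo (0:ℝ) a, (a - s) ^ ((1:ℝ)/2)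
          = ∫ s in (0:ℝ)..a, (a - s) ^ ((1:ℝ)/2) := by
        rw [intervalIntegral.integral_of_le ha.le, MeasureTheory.integral_Ioc_eq_integral_Ioo]
      rw [this, intervalIntegral.integral_comp_sub_left (fun x : ℝ => x ^ ((1:ℝ)/2)) a,
        sub_self, sub_zero, integral_rpow (Or.inl (by norm_num))]
      rw [Real.zero_rpow (by norm_num)]
      norm_num
      ring
    · filter_upwards [ae_restrict_mem measurableSet_Ioo] with s hs
      exact Real.rpow_nonneg (by linarith [hs.2]) _

lemma sq_image_Ioi : (fun x : ℝ => x ^ 2) '' Ioi 0 = Ioi 0 := by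
  ext x
  constructor
  · rintro ⟨y, hy, rfl⟩; exact pow_pos (mem_Ioi.mp hy) 2
  · intro hx; exact ⟨Real.sqrt x, Real.sqrt_pos.2 hx, Real.sq_sqrt (le_of_lt hx)⟩

lemma sq_injOn_Ioi : InjOn (fun x : ℝ => x ^ 2) (Ioi 0) := fun x hx y hy h =>
  (sq_eq_sq₀ (le_of_lt (mem_Ioi.mp hx)) (le_of_lt (mem_Ioi.mp hy))).mp h

lemma Klem (r a : ℝ) (hr : 0 < r) (ha : 0 ≤ a) :
    ∫⁻ lam in Ioi (0:ℝ), ENNReal.ofReal (4 * lam) *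
        ENNReal.ofReal ((max (a - lam ^ 2 / r ^ 2) 0) ^ ((1:ℝ)/2))
      = ENNReal.ofReal ((4/3) * (r ^ 2 * a ^ ((3:ℝ)/2))) := by
  have step1 : ∫⁻ lam in Ioi (0:ℝ), ENNReal.ofReal (4 * lam) *
        ENNReal.ofReal ((max (a - lam ^ 2 / r ^ 2) 0) ^ ((1:ℝ)/2))
      = 2 * ∫⁻ t in Ioi (0:ℝ), ENNReal.ofReal ((max (a - t / r ^ 2) 0) ^ ((1:ℝ)/2)) := by
    have := _root_.lintegral_image_eq_lintegral_abs_deriv_mul (s := Ioi (0:ℝ))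
      (f := fun x => x ^ 2) (f' := fun x => 2 * x) measurableSet_Ioi
      (fun x _ => by simpa using (hasDerivAt_pow 2 x).hasDerivWithinAt)
      sq_injOn_Ioi
      (fun t => 2 * ENNReal.ofReal ((max (a - t / r ^ 2) 0) ^ ((1:ℝ)/2)))
    rw [sq_image_Ioi] at this
    rw [← lintegral_const_mul' _ _ (by norm_num : (2:ℝ≥0∞) ≠ ⊤), this]
    apply setLIntegral_congr_fun measurableSet_Ioi
    intro lam hlam; dsimp only
    have h1 : |2 * lam| = 2 * lam := abs_of_nonneg (by linarith [mem_Ioi.mp hlam])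
    have h2 : ENNReal.ofReal (4 * lam) = 2 * ENNReal.ofReal (2 * lam) := by
      rw [show (2:ℝ≥0∞) = ENNReal.ofReal 2 by simp,
        ← ENNReal.ofReal_mul (by norm_num)]
      congr 1; ring
    rw [h1, h2]; ring
  have step2 : ∫⁻ t in Ioi (0:ℝ), ENNReal.ofReal ((max (a - t / r ^ 2) 0) ^ ((1:ℝ)/2))
      = ENNReal.ofReal (r ^ 2) * ENNReal.ofReal ((2/3) * a ^ ((3:ℝ)/2)) := by
    have him : (fun y : ℝ => r ^ 2 * y) '' Ioi 0 = Ioi 0 :=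
      image_const_mul_Ioi_zero (pow_pos hr 2)
    have := _root_.lintegral_image_eq_lintegral_abs_deriv_mul (s := Ioi (0:ℝ))
      (f := fun y => r ^ 2 * y) (f' := fun _ => r ^ 2) measurableSet_Ioi
      (fun x _ => by simpa using ((hasDerivAt_id x).const_mul (r ^ 2)).hasDerivWithinAt)
      (fun x _ y _ h => by
        field_simp at h; exact h)
      (fun t => ENNReal.ofReal ((max (a - t / r ^ 2) 0) ^ ((1:ℝ)/2)))
    rw [him] at this
    rw [this]
    have hcong : ∫⁻ x in Ioi (0:ℝ), ENNReal.ofReal |r ^ 2| *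
          ENNReal.ofReal ((max (a - r ^ 2 * x / r ^ 2) 0) ^ ((1:ℝ)/2))
        = ∫⁻ x in Ioi (0:ℝ), ENNReal.ofReal (r ^ 2) *
          ENNReal.ofReal ((max (a - x) 0) ^ ((1:ℝ)/2)) := by
      apply setLIntegral_congr_fun measurableSet_Ioi
      intro x _; dsimp only
      rw [abs_of_nonneg (by positivity : (0:ℝ) ≤ r ^ 2),
        mul_div_cancel_left₀ _ (by positivity : (r:ℝ) ^ 2 ≠ 0)]
    rw [hcong, lintegral_const_mul' _ _ ENNReal.ofReal_ne_top, Jlem a ha]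
  rw [step1, step2, ← ENNReal.ofReal_mul (by positivity : (0:ℝ) ≤ r ^ 2),
    show (2:ℝ≥0∞) = ENNReal.ofReal 2 by simp, ← ENNReal.ofReal_mul (by norm_num)]
  congr 1
  ring

theorem lintegral_kappa_eq (Φ : ℝ → ℝ) (hm : Measurable Φ) (h0 : ∀ r, 0 < r → 0 ≤ Φ r) :
    (∫⁻ lam in Ioi (0:ℝ), ENNReal.ofReal (4 * lam) *
        (ENNReal.ofReal (1 / π) *
          ∫⁻ r in Ioi (0:ℝ),
            ENNReal.ofReal ((max (Φ r - lam ^ 2 / r ^ 2) 0) ^ ((1:ℝ)/2)))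
      = ENNReal.ofReal (4 / (3 * π)) *
          ∫⁻ r in Ioi (0:ℝ), ENNReal.ofReal (r ^ 2 * (Φ r) ^ ((3:ℝ)/2))) ∧
    ((ENNReal.ofReal (1 / (3 * π ^ 2)) *
        ∫⁻ r in Ioi (0:ℝ), ENNReal.ofReal (4 * π * r ^ 2 * (Φ r) ^ ((3:ℝ)/2)) = 1) →
      ∫⁻ lam in Ioi (0:ℝ), ENNReal.ofReal (4 * lam) *
        (ENNReal.ofReal (1 / π) *
          ∫⁻ r in Ioi (0:ℝ),
            ENNReal.ofReal ((max (Φ r - lam ^ 2 / r ^ 2) 0) ^ ((1:ℝ)/2))) = 1) := by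
  have hmain : ∫⁻ lam in Ioi (0:ℝ), ENNReal.ofReal (4 * lam) *
        (ENNReal.ofReal (1 / π) *
          ∫⁻ r in Ioi (0:ℝ),
            ENNReal.ofReal ((max (Φ r - lam ^ 2 / r ^ 2) 0) ^ ((1:ℝ)/2)))
      = ENNReal.ofReal (4 / (3 * π)) *
          ∫⁻ r in Ioi (0:ℝ), ENNReal.ofReal (r ^ 2 * (Φ r) ^ ((3:ℝ)/2)) := by
    have step0 : ∀ lam : ℝ, ENNReal.ofReal (4 * lam) *
        (ENNReal.ofReal (1 / π) *
          ∫⁻ r in Ioi (0:ℝ),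
            ENNReal.ofReal ((max (Φ r - lam ^ 2 / r ^ 2) 0) ^ ((1:ℝ)/2)))
        = ENNReal.ofReal (1 / π) *
          ∫⁻ r in Ioi (0:ℝ), ENNReal.ofReal (4 * lam) *
            ENNReal.ofReal ((max (Φ r - lam ^ 2 / r ^ 2) 0) ^ ((1:ℝ)/2)) := by
      intro lam
      rw [lintegral_const_mul' _ _ ENNReal.ofReal_ne_top, ← mul_assoc,
        mul_comm (ENNReal.ofReal (4 * lam)) (ENNReal.ofReal (1/π)), mul_assoc]
    simp_rw [step0]
    rw [lintegral_const_mul' _ _ ENNReal.ofReal_ne_top]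
    have hswap : ∫⁻ lam in Ioi (0:ℝ), ∫⁻ r in Ioi (0:ℝ),
          ENNReal.ofReal (4 * lam) *
            ENNReal.ofReal ((max (Φ r - lam ^ 2 / r ^ 2) 0) ^ ((1:ℝ)/2))
        = ∫⁻ r in Ioi (0:ℝ), ∫⁻ lam in Ioi (0:ℝ),
          ENNReal.ofReal (4 * lam) *
            ENNReal.ofReal ((max (Φ r - lam ^ 2 / r ^ 2) 0) ^ ((1:ℝ)/2)) := by
      apply lintegral_lintegral_swap
      apply Measurable.aemeasurable
      fun_prop
    rw [hswap]
    have hinner : ∫⁻ r in Ioi (0:ℝ), (∫⁻ lam in Ioi (0:ℝ),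
          ENNReal.ofReal (4 * lam) *
            ENNReal.ofReal ((max (Φ r - lam ^ 2 / r ^ 2) 0) ^ ((1:ℝ)/2)))
        = ∫⁻ r in Ioi (0:ℝ), ENNReal.ofReal ((4/3) * (r ^ 2 * (Φ r) ^ ((3:ℝ)/2))) := by
      apply setLIntegral_congr_fun measurableSet_Ioi
      intro r hr
      exact Klem r (Φ r) (mem_Ioi.mp hr) (h0 r (mem_Ioi.mp hr))
    rw [hinner]
    have hsplit : ∀ r : ℝ, ENNReal.ofReal ((4/3) * (r ^ 2 * (Φ r) ^ ((3:ℝ)/2)))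
        = ENNReal.ofReal (4/3) * ENNReal.ofReal (r ^ 2 * (Φ r) ^ ((3:ℝ)/2)) := by
      intro r; rw [ENNReal.ofReal_mul (by norm_num)]
    simp_rw [hsplit]
    rw [lintegral_const_mul' _ _ ENNReal.ofReal_ne_top, ← mul_assoc,
      ← ENNReal.ofReal_mul (by positivity)]
    congr 2
    rw [div_mul_div_comm]
    norm_num
    ring
  refine ⟨hmain, fun hnorm => ?_⟩
  rw [hmain]
  have h1 : ∀ r : ℝ, ENNReal.ofReal (4 * π * r ^ 2 * (Φ r) ^ ((3:ℝ)/2))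
      = ENNReal.ofReal (4 * π) * ENNReal.ofReal (r ^ 2 * (Φ r) ^ ((3:ℝ)/2)) := by
    intro r
    rw [← ENNReal.ofReal_mul (by positivity)]
    congr 1; ring
  simp_rw [h1] at hnorm
  rw [lintegral_const_mul' _ _ ENNReal.ofReal_ne_top, ← mul_assoc,
    ← ENNReal.ofReal_mul (by positivity)] at hnorm
  have : (1 / (3 * π ^ 2)) * (4 * π) = 4 / (3 * π) := by
    have hπ : (π:ℝ) ≠ 0 := Real.pi_ne_zero
    field_simp
  rwa [this] at hnorm
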